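/- Let p be a prime and s₁, s₂ real numbers with s₁ > 2 and s₂ > 2. Set X = p^{−s₁} and Y = p^{−s₂}. Then (1 − p⁻¹)⁻² times the integral over {(x,y,z) ∈ ℤ_p³ : ‖z‖ < ‖x‖ < ‖y‖} of ‖x‖^{s₁−2}·‖z‖^{s₁−1}·‖y‖^{s₂−s₁} with respect to μ³ equals (p − 1)·X³ / ((1 − X)(1 − pX²)(1 − XY)). -/

import Mathlib

open MeasureTheory

open ENNReal

variable {p : ℕ} [Fact p.Prime] [MeasurableSpace ℤ_[p]] [BorelSpace ℤ_[p]]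

lemma meas_ball (μ : Measure ℤ_[p]) [μ.IsAddHaarMeasure] (hμ : μ Set.univ = 1) (n : ℕ) :
    μ {x : ℤ_[p] | ‖x‖ ≤ (p:ℝ) ^ (-n : ℤ)} = ((p : ℝ≥0∞) ^ n)⁻¹ := by
  have hp : p.Prime := Fact.out
  haveI : NeZero (p ^ n) := ⟨pow_ne_zero _ hp.ne_zero⟩
  set B := {x : ℤ_[p] | ‖x‖ ≤ (p:ℝ) ^ (-n : ℤ)} with hB
  have hBmeas : MeasurableSet B := by
    have : B = Metric.closedBall 0 ((p:ℝ) ^ (-n : ℤ)) := by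
      ext x; simp [hB, Metric.mem_closedBall, dist_zero_right]
    rw [this]; exact measurableSet_closedBall
  have hfib : ∀ c : ZMod (p ^ n),
      PadicInt.toZModPow n ⁻¹' {c} = (fun x => -((c.val : ℕ) : ℤ_[p]) + x) ⁻¹' B := by
    intro c
    have hx0 : (PadicInt.toZModPow n) (((c.val : ℕ) : ℤ_[p])) = c := by
      rw [map_natCast]; exact ZMod.natCast_zmod_val c
    ext x
    simp only [Set.mem_preimage, Set.mem_singleton_iff, hB, Set.mem_setOf_eq]
    rw [PadicInt.norm_le_pow_iff_mem_span_pow, ← PadicInt.ker_toZModPow, RingHom.mem_ker,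
      map_add, map_neg, hx0]
    constructor
    · intro h; rw [h]; ring
    · intro h; have := congrArg (fun z => c + z) h; simpa using this.symm.symm
  have hfibmeas : ∀ c : ZMod (p ^ n), MeasurableSet (PadicInt.toZModPow n ⁻¹' {c}) := by
    intro c; rw [hfib c]; exact (measurable_const_add _) hBmeas
  have hcover : (⋃ c : ZMod (p ^ n), PadicInt.toZModPow n ⁻¹' {c}) = Set.univ := by
    ext x; simp
  have hdisj : Pairwise (Function.onFun Disjoint
      fun c : ZMod (p ^ n) => PadicInt.toZModPow n ⁻¹' {c}) := by
    intro c c' hne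
    refine Set.disjoint_left.2 ?_
    rintro x hx hx'
    simp only [Set.mem_preimage, Set.mem_singleton_iff] at hx hx'
    exact hne (hx ▸ hx')
  have hsum : μ Set.univ = ∑' c : ZMod (p ^ n), μ (PadicInt.toZModPow n ⁻¹' {c}) := by
    rw [← hcover]; exact measure_iUnion hdisj hfibmeas
  have hval : ∀ c : ZMod (p ^ n), μ (PadicInt.toZModPow n ⁻¹' {c}) = μ B := by
    intro c; rw [hfib c]; exact measure_preimage_add μ _ B
  rw [hμ, tsum_fintype] at hsum
  simp only [hval, Finset.sum_const, Finset.card_univ, ZMod.card, nsmul_eq_mul] at hsum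
  have hppos : ((p : ℝ≥0∞) ^ n) ≠ 0 := by
    simp [pow_ne_zero, Nat.cast_ne_zero, hp.ne_zero]
  have hptop : ((p : ℝ≥0∞) ^ n) ≠ ∞ := by simp
  have : ((p : ℝ≥0∞) ^ n) * μ B = 1 := by
    rw [show ((p : ℝ≥0∞) ^ n) = ((p ^ n : ℕ) : ℝ≥0∞) by push_cast; ring]
    exact hsum.symm
  calc μ B = ((p : ℝ≥0∞) ^ n)⁻¹ * (((p : ℝ≥0∞) ^ n) * μ B) := by
        rw [← mul_assoc, ENNReal.inv_mul_cancel hppos hptop, one_mul]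
    _ = ((p : ℝ≥0∞) ^ n)⁻¹ := by rw [this, mul_one]

set_option linter.unusedSectionVars false
section helpers
variable (p) in
noncomputable def dd (n : ℕ) : ℝ := (p : ℝ) ^ (-(n : ℝ))

lemma hp1 : (1 : ℝ) < p := by exact_mod_cast (Fact.out : p.Prime).one_lt

lemma hd_eq (n : ℕ) : (p:ℝ) ^ (-n : ℤ) = dd p n := by
  rw [dd, ← Real.rpow_intCast (p:ℝ) (-n : ℤ)]; push_cast; ring_nf

lemma dd_pos (n : ℕ) : 0 < dd p n :=
  Real.rpow_pos_of_pos (by linarith [hp1 (p := p)]) _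

lemma dd_lt_iff {m n : ℕ} : dd p m < dd p n ↔ n < m := by
  rw [dd, dd, Real.rpow_lt_rpow_left_iff (hp1 (p := p)), neg_lt_neg_iff, Nat.cast_lt]

lemma dd_le_iff {m n : ℕ} : dd p m ≤ dd p n ↔ n ≤ m := by
  rw [dd, dd, Real.rpow_le_rpow_left_iff (hp1 (p := p)), neg_le_neg_iff, Nat.cast_le]

lemma dd_inj {m n : ℕ} (h : dd p m = dd p n) : m = n := by
  have h1 := (dd_le_iff (p:=p) (m:=m) (n:=n)).1 h.le
  have h2 := (dd_le_iff (p:=p) (m:=n) (n:=m)).1 h.ge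
  omega

lemma norm_eq_dd {x : ℤ_[p]} (hx : x ≠ 0) : ∃ n : ℕ, ‖x‖ = dd p n := by
  refine ⟨x.valuation, ?_⟩
  rw [PadicInt.norm_eq_zpow_neg_valuation hx, ← hd_eq]

lemma ball_measurable (m : ℕ) : MeasurableSet {x : ℤ_[p] | ‖x‖ ≤ dd p m} := by
  have : {x : ℤ_[p] | ‖x‖ ≤ dd p m} = Metric.closedBall 0 (dd p m) := by
    ext x; simp [Metric.mem_closedBall, dist_zero_right]
  rw [this]; exact measurableSet_closedBall

lemma meas_ball' (μ : Measure ℤ_[p]) [μ.IsAddHaarMeasure] (hμ : μ Set.univ = 1) (m : ℕ) :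
    μ {x : ℤ_[p] | ‖x‖ ≤ dd p m} = ((p:ℝ≥0∞)⁻¹) ^ m := by
  rw [← ENNReal.inv_pow, ← meas_ball μ hμ m]
  congr 1; ext x; rw [Set.mem_setOf_eq, Set.mem_setOf_eq, hd_eq]

lemma meas_sphere (μ : Measure ℤ_[p]) [μ.IsAddHaarMeasure] (hμ : μ Set.univ = 1) (n : ℕ) :
    μ {x : ℤ_[p] | ‖x‖ = dd p n} = (1 - ((p:ℝ≥0∞))⁻¹) * ((p:ℝ≥0∞)⁻¹) ^ n := by
  have hpne : ((p:ℝ≥0∞))⁻¹ ≠ ⊤ := by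
    simp [(Fact.out : p.Prime).ne_zero]
  have hdecomp : {x : ℤ_[p] | ‖x‖ = dd p n} =
      {x : ℤ_[p] | ‖x‖ ≤ dd p n} \ {x : ℤ_[p] | ‖x‖ ≤ dd p (n+1)} := by
    ext x
    simp only [Set.mem_setOf_eq, Set.mem_diff, not_le]
    constructor
    · intro h
      exact ⟨h.le, by rw [h]; exact dd_lt_iff.2 (by omega)⟩
    · rintro ⟨h1, h2⟩
      have hx : x ≠ 0 := by
        intro h0
        rw [h0, norm_zero] at h2
        exact absurd h2 (not_lt.2 (dd_pos (p:=p) (n+1)).le)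
      obtain ⟨m, hm⟩ := norm_eq_dd hx
      rw [hm] at h1 h2 ⊢
      have := dd_le_iff.1 h1
      have := dd_lt_iff.1 h2
      congr 1; omega
  have hsub : {x : ℤ_[p] | ‖x‖ ≤ dd p (n+1)} ⊆ {x : ℤ_[p] | ‖x‖ ≤ dd p n} := by
    intro x hx
    exact le_trans hx (dd_le_iff.2 (by omega))
  have hfin : μ {x : ℤ_[p] | ‖x‖ ≤ dd p (n+1)} ≠ ⊤ := by
    rw [meas_ball' μ hμ]
    exact ENNReal.pow_ne_top hpne
  rw [hdecomp, measure_diff hsub ((ball_measurable (n+1)).nullMeasurableSet) hfin,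
    meas_ball' μ hμ, meas_ball' μ hμ]
  rw [pow_succ, ENNReal.sub_mul (fun _ _ => ENNReal.pow_ne_top hpne), one_mul]
  ring_nf

lemma meas_zero (μ : Measure ℤ_[p]) [μ.IsAddHaarMeasure] (hμ : μ Set.univ = 1) :
    μ ({0} : Set ℤ_[p]) = 0 := by
  have h : ∀ n : ℕ, μ ({0} : Set ℤ_[p]) ≤ ((p:ℝ≥0∞)⁻¹) ^ n := by
    intro n
    rw [← meas_ball' μ hμ n]
    apply measure_mono
    intro x hx
    simp only [Set.mem_singleton_iff] at hx
    simp only [hx, Set.mem_setOf_eq, norm_zero]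
    exact (dd_pos n).le
  have htend : Filter.Tendsto (fun n : ℕ => ((p:ℝ≥0∞)⁻¹) ^ n) Filter.atTop (nhds 0) :=
    ENNReal.tendsto_pow_atTop_nhds_zero_of_lt_one (by
      rw [ENNReal.inv_lt_one]
      exact_mod_cast (Fact.out : p.Prime).one_lt)
  exact le_antisymm (le_of_tendsto_of_tendsto' tendsto_const_nhds htend h) zero_le
end helpers

set_option maxHeartbeats 2000000 in
theorem stmt7 (p : ℕ) [Fact p.Prime]
    [MeasurableSpace ℤ_[p]] [BorelSpace ℤ_[p]]
    (μ : Measure ℤ_[p]) [μ.IsAddHaarMeasure] (hμ : μ Set.univ = 1)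
    (s₁ s₂ : ℝ) (hs₁ : 2 < s₁) (hs₂ : 2 < s₂)
    (X Y : ℝ) (hX : X = (p : ℝ) ^ (-s₁)) (hY : Y = (p : ℝ) ^ (-s₂)) :
    ((1 - (p : ℝ)⁻¹) ^ 2)⁻¹ *
      ∫ w in {w : ℤ_[p] × ℤ_[p] × ℤ_[p] | ‖w.2.2‖ < ‖w.1‖ ∧ ‖w.1‖ < ‖w.2.1‖},
        ‖w.1‖ ^ (s₁ - 2) * ‖w.2.2‖ ^ (s₁ - 1) * ‖w.2.1‖ ^ (s₂ - s₁) ∂(μ.prod (μ.prod μ)) =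
      ((p : ℝ) - 1) * X ^ 3 / ((1 - X) * (1 - (p : ℝ) * X ^ 2) * (1 - X * Y)) := by
  have hp : p.Prime := Fact.out
  have hp0 : (0:ℝ) < p := by exact_mod_cast hp.pos
  have hp1' : (1:ℝ) < p := hp1
  haveI : IsFiniteMeasure μ := ⟨by rw [hμ]; exact ENNReal.one_lt_top⟩
  set t : ℝ := (p:ℝ)⁻¹ with htdef
  have ht0 : 0 ≤ t := by positivity
  have ht1 : t < 1 := by rw [htdef, inv_lt_one_iff₀]; right; exact hp1'
  set rA : ℝ := (p:ℝ) ^ (1 - s₁) with hrA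
  set rB : ℝ := (p:ℝ) ^ (s₁ - s₂ - 1) with hrB
  have hrA0 : 0 ≤ rA := (Real.rpow_pos_of_pos hp0 _).le
  have hrB0 : 0 ≤ rB := (Real.rpow_pos_of_pos hp0 _).le
  have hX0 : 0 < X := by rw [hX]; positivity
  have hY0 : 0 < Y := by rw [hY]; positivity
  -- real power identities
  have hrpow_nat : ∀ (u : ℝ) (n : ℕ), ((p:ℝ) ^ u) ^ n = (p:ℝ) ^ (u * n) := by
    intro u n; rw [← Real.rpow_natCast ((p:ℝ) ^ u) n, ← Real.rpow_mul hp0.le]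
  have ht_rpow : t = (p:ℝ) ^ (-1 : ℝ) := by rw [Real.rpow_neg_one]
  have hkey : ∀ a b c : ℕ,
      dd p a ^ (s₁ - 2) * dd p c ^ (s₁ - 1) * dd p b ^ (s₂ - s₁) * (t^a * (t^b * t^c))
        = rA^a * rB^b * X^c := by
    intro a b c
    simp only [dd, hrA, hrB, hX, ht_rpow, ← Real.rpow_mul hp0.le, hrpow_nat,
      ← Real.rpow_add hp0]
    congr 1; push_cast; ring
  have hXY : rA * rB * X = X * Y := by
    simp only [hrA, hrB, hX, hY, ← Real.rpow_add hp0]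
    congr 1; ring
  have hpX2 : rA * X = (p:ℝ) * X ^ 2 := by
    have h2 : (p:ℝ) * X^2 = (p:ℝ) ^ (1 + -s₁*((2:ℕ):ℝ)) := by
      rw [Real.rpow_add hp0, Real.rpow_one, hX, hrpow_nat]
    rw [h2, hrA, hX, ← Real.rpow_add hp0]
    congr 1; push_cast; ring
  have hpX3 : rA * X ^ 2 = (p:ℝ) * X ^ 3 := by
    have h2 : (p:ℝ) * X^3 = (p:ℝ) ^ (1 + -s₁*((3:ℕ):ℝ)) := by
      rw [Real.rpow_add hp0, Real.rpow_one, hX, hrpow_nat]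
    rw [h2, hrA, hX, hrpow_nat, ← Real.rpow_add hp0]
    congr 1; push_cast; ring
  have hX1 : X < 1 := by
    rw [hX]; exact Real.rpow_lt_one_of_one_lt_of_neg hp1' (by linarith)
  have hXY1 : X * Y < 1 := by
    rw [← hXY, hrA, hrB, hX, ← Real.rpow_add hp0, ← Real.rpow_add hp0]
    exact Real.rpow_lt_one_of_one_lt_of_neg hp1' (by linarith)
  have hpX21 : (p:ℝ) * X ^ 2 < 1 := by
    rw [← hpX2, hrA, hX, ← Real.rpow_add hp0]
    exact Real.rpow_lt_one_of_one_lt_of_neg hp1' (by linarith)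
  -- ENNReal constants
  set κ : ℝ≥0∞ := 1 - ((p:ℝ≥0∞))⁻¹ with hκdef
  set τ : ℝ≥0∞ := ((p:ℝ≥0∞))⁻¹ with hτdef
  have hτR : τ = ENNReal.ofReal t := by
    rw [hτdef, htdef, ENNReal.ofReal_inv_of_pos hp0, ENNReal.ofReal_natCast]
  have hκR : κ = ENNReal.ofReal (1 - t) := by
    rw [hκdef, ENNReal.ofReal_sub _ ht0, ENNReal.ofReal_one, ← hτR, hτdef]
  -- sets
  set S : ℕ → Set ℤ_[p] := fun n => {x : ℤ_[p] | ‖x‖ = dd p n} with hSdef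
  have hSmeas : ∀ n, MeasurableSet (S n) := by
    intro n
    exact measurable_norm (measurableSet_singleton (dd p n))
  set T : ℕ × ℕ × ℕ → Set (ℤ_[p] × ℤ_[p] × ℤ_[p]) := fun q =>
    if q.2.1 < q.1 ∧ q.1 < q.2.2 then S q.1 ×ˢ S q.2.1 ×ˢ S q.2.2 else ∅ with hTdef
  have hTmeas : ∀ q, MeasurableSet (T q) := by
    rintro ⟨a, b, c⟩
    simp only [hTdef]
    split
    · exact (hSmeas a).prod ((hSmeas b).prod (hSmeas c))
    · exact MeasurableSet.empty
  have hTdisj : Pairwise (Function.onFun Disjoint T) := by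
    rintro ⟨a, b, c⟩ ⟨a', b', c'⟩ hne
    rw [Function.onFun, Set.disjoint_left]
    intro w hw hw'
    simp only [hTdef] at hw hw'
    split_ifs at hw hw' with h h'
    · simp only [Set.mem_prod, hSdef, Set.mem_setOf_eq] at hw hw'
      obtain ⟨h1, h2, h3⟩ := hw
      obtain ⟨h1', h2', h3'⟩ := hw'
      apply hne
      rw [Prod.mk.injEq, Prod.mk.injEq]
      exact ⟨dd_inj (h1 ▸ h1'), dd_inj (h2 ▸ h2'), dd_inj (h3 ▸ h3')⟩
    · exact hw'
    · exact hw
    · exact hw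
  set A := {w : ℤ_[p] × ℤ_[p] × ℤ_[p] | ‖w.2.2‖ < ‖w.1‖ ∧ ‖w.1‖ < ‖w.2.1‖} with hAdef
  have hUA : (⋃ q, T q) ⊆ A := by
    intro w hw
    simp only [Set.mem_iUnion] at hw
    obtain ⟨⟨a, b, c⟩, hq⟩ := hw
    simp only [hTdef] at hq
    split_ifs at hq with h
    · simp only [Set.mem_prod, hSdef, Set.mem_setOf_eq] at hq
      obtain ⟨h1, h2, h3⟩ := hq
      refine ⟨?_, ?_⟩
      · rw [h1, h3]; exact dd_lt_iff.2 h.2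
      · rw [h1, h2]; exact dd_lt_iff.2 h.1
    · exact absurd hq (Set.notMem_empty w)
  have hsubZ : A \ (⋃ q, T q) ⊆ {w : ℤ_[p] × ℤ_[p] × ℤ_[p] | w.2.2 = 0} := by
    rintro w ⟨hwA, hwU⟩
    by_contra hz
    simp only [Set.mem_setOf_eq] at hz
    obtain ⟨hlt1, hlt2⟩ := hwA
    have hx1 : w.1 ≠ 0 := by
      intro h0
      rw [h0, norm_zero] at hlt1
      exact absurd hlt1 (not_lt.2 (norm_nonneg _))
    have hy1 : w.2.1 ≠ 0 := by
      intro h0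
      rw [h0, norm_zero] at hlt2
      exact absurd (lt_trans (lt_of_le_of_lt (norm_nonneg _) hlt1) hlt2) (lt_irrefl 0)
    obtain ⟨a, ha⟩ := norm_eq_dd hx1
    obtain ⟨b, hb⟩ := norm_eq_dd hy1
    obtain ⟨c, hc⟩ := norm_eq_dd hz
    apply hwU
    simp only [Set.mem_iUnion]
    refine ⟨(a, b, c), ?_⟩
    have hba : b < a := dd_lt_iff.1 (by rw [← ha, ← hb]; exact hlt2)
    have hac : a < c := dd_lt_iff.1 (by rw [← ha, ← hc]; exact hlt1)
    simp only [hTdef]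
    rw [if_pos ⟨hba, hac⟩]
    exact ⟨ha, hb, hc⟩
  have hZ0 : (μ.prod (μ.prod μ)) {w : ℤ_[p] × ℤ_[p] × ℤ_[p] | w.2.2 = 0} = 0 := by
    have : {w : ℤ_[p] × ℤ_[p] × ℤ_[p] | w.2.2 = 0}
        = Set.univ ×ˢ Set.univ ×ˢ ({0} : Set ℤ_[p]) := by
      ext w
      simp only [Set.mem_setOf_eq, Set.mem_prod, Set.mem_univ, true_and,
        Set.mem_singleton_iff]
    rw [this, Measure.prod_prod, Measure.prod_prod, meas_zero μ hμ, mul_zero, mul_zero]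
  have haeeq : (⋃ q, T q) =ᵐ[μ.prod (μ.prod μ)] A := by
    rw [MeasureTheory.ae_eq_set]
    constructor
    · rw [Set.diff_eq_empty.2 hUA]; exact measure_empty
    · exact measure_mono_null hsubZ hZ0
  -- the integrand
  set f : ℤ_[p] × ℤ_[p] × ℤ_[p] → ℝ :=
    fun w => ‖w.1‖ ^ (s₁ - 2) * ‖w.2.2‖ ^ (s₁ - 1) * ‖w.2.1‖ ^ (s₂ - s₁) with hfdef
  have hfmeas : Measurable f :=
    ((measurable_fst.norm.pow measurable_const).mul
      (measurable_snd.snd.norm.pow measurable_const)).mul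
      (measurable_snd.fst.norm.pow measurable_const)
  have hf0 : ∀ w, 0 ≤ f w := by
    intro w
    exact mul_nonneg (mul_nonneg (Real.rpow_nonneg (norm_nonneg _) _)
      (Real.rpow_nonneg (norm_nonneg _) _)) (Real.rpow_nonneg (norm_nonneg _) _)
  have hint : ∫ w in A, f w ∂(μ.prod (μ.prod μ))
      = (∫⁻ w in A, ENNReal.ofReal (f w) ∂(μ.prod (μ.prod μ))).toReal := by
    rw [MeasureTheory.integral_eq_lintegral_of_nonneg_ae
      (Filter.Eventually.of_forall hf0) hfmeas.aestronglyMeasurable]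
  -- term computation
  have hterm : ∀ q : ℕ × ℕ × ℕ, ∫⁻ w in T q, ENNReal.ofReal (f w) ∂(μ.prod (μ.prod μ))
      = if q.2.1 < q.1 ∧ q.1 < q.2.2
        then κ^3 * ENNReal.ofReal (rA^q.1 * rB^q.2.1 * X^q.2.2) else 0 := by
    rintro ⟨a, b, c⟩
    by_cases h : b < a ∧ a < c
    · have hTq : T (a, b, c) = S a ×ˢ S b ×ˢ S c := by
        simp only [hTdef]; rw [if_pos h]
      rw [hTq, if_pos h]
      have hmeas : MeasurableSet (S a ×ˢ S b ×ˢ S c) :=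
        (hSmeas a).prod ((hSmeas b).prod (hSmeas c))
      have hconst : ∀ w ∈ S a ×ˢ S b ×ˢ S c, ENNReal.ofReal (f w)
          = ENNReal.ofReal (dd p a ^ (s₁-2) * dd p c ^ (s₁-1) * dd p b ^ (s₂-s₁)) := by
        intro w hw
        simp only [Set.mem_prod, hSdef, Set.mem_setOf_eq] at hw
        obtain ⟨hx, hy, hz⟩ := hw
        simp only [hfdef]
        rw [hx, hy, hz]
      rw [MeasureTheory.setLIntegral_congr_fun hmeas hconst,
        MeasureTheory.setLIntegral_const, Measure.prod_prod, Measure.prod_prod,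
        meas_sphere μ hμ a, meas_sphere μ hμ b, meas_sphere μ hμ c]
      have hCpos : 0 ≤ dd p a ^ (s₁-2) * dd p c ^ (s₁-1) * dd p b ^ (s₂-s₁) := by
        have := dd_pos (p := p) a
        have := dd_pos (p := p) b
        have := dd_pos (p := p) c
        positivity
      calc ENNReal.ofReal (dd p a ^ (s₁-2) * dd p c ^ (s₁-1) * dd p b ^ (s₂-s₁)) *
            ((1 - (↑p)⁻¹) * (↑p)⁻¹ ^ a * ((1 - (↑p)⁻¹) * (↑p)⁻¹ ^ b * ((1 - (↑p)⁻¹) * (↑p)⁻¹ ^ c)))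
          = κ^3 * (ENNReal.ofReal (dd p a ^ (s₁-2) * dd p c ^ (s₁-1) * dd p b ^ (s₂-s₁)) *
              (τ^a * (τ^b * τ^c))) := by
            rw [hκdef, hτdef]; ring
        _ = κ^3 * ENNReal.ofReal (dd p a ^ (s₁-2) * dd p c ^ (s₁-1) * dd p b ^ (s₂-s₁) *
              (t^a * (t^b * t^c))) := by
            rw [hτR, ← ENNReal.ofReal_pow ht0, ← ENNReal.ofReal_pow ht0, ← ENNReal.ofReal_pow ht0,
              ← ENNReal.ofReal_mul (pow_nonneg ht0 b), ← ENNReal.ofReal_mul (pow_nonneg ht0 a),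
              ← ENNReal.ofReal_mul hCpos]
        _ = κ^3 * ENNReal.ofReal (rA^a * rB^b * X^c) := by rw [hkey a b c]
    · have hTq : T (a, b, c) = ∅ := by simp only [hTdef]; rw [if_neg h]
      rw [hTq, if_neg h, Measure.restrict_empty, lintegral_zero_measure]
  -- sum over pieces
  have hAU : ∫⁻ w in A, ENNReal.ofReal (f w) ∂(μ.prod (μ.prod μ))
      = ∑' q : ℕ × ℕ × ℕ, ∫⁻ w in T q, ENNReal.ofReal (f w) ∂(μ.prod (μ.prod μ)) := by
    rw [← MeasureTheory.setLIntegral_congr haeeq, MeasureTheory.lintegral_iUnion hTmeas hTdisj]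
  -- tsum evaluation
  set eA : ℝ≥0∞ := ENNReal.ofReal rA with heA
  set eB : ℝ≥0∞ := ENNReal.ofReal rB with heB
  set eX : ℝ≥0∞ := ENNReal.ofReal X with heX
  set g : ℕ × ℕ × ℕ → ℝ≥0∞ := fun q =>
    if q.2.1 < q.1 ∧ q.1 < q.2.2
    then κ^3 * ENNReal.ofReal (rA^q.1 * rB^q.2.1 * X^q.2.2) else 0 with hgdef
  set ψ : ℕ × ℕ × ℕ → ℕ × ℕ × ℕ :=
    fun v => (v.1 + v.2.1 + 1, v.1, v.1 + v.2.1 + v.2.2 + 2) with hψdef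
  have hψinj : Function.Injective ψ := by
    rintro ⟨i, j, k⟩ ⟨i', j', k'⟩ h
    simp only [hψdef, Prod.mk.injEq] at h
    rw [Prod.mk.injEq, Prod.mk.injEq]
    omega
  have hsupp : Function.support g ⊆ Set.range ψ := by
    rintro ⟨a, b, c⟩ hq
    by_cases h : b < a ∧ a < c
    · refine ⟨(b, a - b - 1, c - a - 1), ?_⟩
      simp [hψdef, Prod.mk.injEq]
      omega
    · exfalso
      apply hq
      simp only [hgdef, if_neg h]
  have tsum3 : ∀ c G H K : ℝ≥0∞, (∑' v : ℕ × ℕ × ℕ, c * (G^v.1 * (H^v.2.1 * K^v.2.2)))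
      = c * ((1-G)⁻¹ * ((1-H)⁻¹ * (1-K)⁻¹)) := by
    intro c G H K
    rw [ENNReal.tsum_prod']
    simp only [ENNReal.tsum_prod', ENNReal.tsum_mul_left, ENNReal.tsum_mul_right,
      ENNReal.tsum_geometric]
  have hgψ : ∀ v : ℕ × ℕ × ℕ, g (ψ v) = (κ^3 * (eA * eX^2)) *
      ((eA*eB*eX)^v.1 * ((eA*eX)^v.2.1 * eX^v.2.2)) := by
    rintro ⟨i, j, k⟩
    simp only [hgdef, hψdef]
    rw [if_pos (by constructor <;> omega)]
    rw [ENNReal.ofReal_mul (mul_nonneg (pow_nonneg hrA0 _) (pow_nonneg hrB0 _)),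
      ENNReal.ofReal_mul (pow_nonneg hrA0 _),
      ENNReal.ofReal_pow hrA0, ENNReal.ofReal_pow hrB0, ENNReal.ofReal_pow hX0.le,
      ← heA, ← heB, ← heX]
    ring
  have hsum : (∑' q : ℕ × ℕ × ℕ, g q) = (κ^3 * (eA * eX^2)) *
      ((1 - eA*eB*eX)⁻¹ * ((1 - eA*eX)⁻¹ * (1 - eX)⁻¹)) := by
    rw [← hψinj.tsum_eq hsupp, tsum_congr hgψ, tsum3]
  -- put everything together
  have hL : ∫⁻ w in A, ENNReal.ofReal (f w) ∂(μ.prod (μ.prod μ))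
      = ENNReal.ofReal (1-t)^3 * (ENNReal.ofReal ((p:ℝ) * X^3) *
        ((ENNReal.ofReal (1 - X*Y))⁻¹ * ((ENNReal.ofReal (1 - (p:ℝ)*X^2))⁻¹ *
          (ENNReal.ofReal (1 - X))⁻¹))) := by
    rw [hAU, tsum_congr hterm]
    have : (fun q : ℕ × ℕ × ℕ => if q.2.1 < q.1 ∧ q.1 < q.2.2
        then κ^3 * ENNReal.ofReal (rA^q.1 * rB^q.2.1 * X^q.2.2) else 0) = g := rfl
    rw [this, hsum]
    have e1 : eA * eB * eX = ENNReal.ofReal (X * Y) := by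
      rw [heA, heB, heX, ← ENNReal.ofReal_mul hrA0, ← ENNReal.ofReal_mul (mul_nonneg hrA0 hrB0),
        hXY]
    have e2 : eA * eX = ENNReal.ofReal ((p:ℝ) * X^2) := by
      rw [heA, heX, ← ENNReal.ofReal_mul hrA0, hpX2]
    have e3 : eA * eX^2 = ENNReal.ofReal ((p:ℝ) * X^3) := by
      rw [heA, heX, ← ENNReal.ofReal_pow hX0.le, ← ENNReal.ofReal_mul hrA0, hpX3]
    have e4 : ∀ r : ℝ, 0 ≤ r → (1 : ℝ≥0∞) - ENNReal.ofReal r = ENNReal.ofReal (1 - r) := by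
      intro r hr
      rw [ENNReal.ofReal_sub _ hr, ENNReal.ofReal_one]
    rw [e1, e2, e3, hκR, e4 _ (mul_nonneg hX0.le hY0.le),
      e4 _ (by positivity), e4 _ hX0.le]
    ring
  rw [hint, hL]
  rw [ENNReal.toReal_mul, ENNReal.toReal_mul, ENNReal.toReal_mul, ENNReal.toReal_mul,
    ENNReal.toReal_pow, ENNReal.toReal_inv, ENNReal.toReal_inv, ENNReal.toReal_inv,
    ENNReal.toReal_ofReal (by linarith), ENNReal.toReal_ofReal (by positivity),
    ENNReal.toReal_ofReal (by linarith), ENNReal.toReal_ofReal (by linarith),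
    ENNReal.toReal_ofReal (by linarith)]
  have h1t : (0:ℝ) < 1 - t := by linarith
  have h1X : (0:ℝ) < 1 - X := by linarith
  have h1XY : (0:ℝ) < 1 - X*Y := by linarith
  have h1pX2 : (0:ℝ) < 1 - (p:ℝ)*X^2 := by linarith
  have ht' : (1:ℝ) - t ≠ 0 := ne_of_gt h1t
  have hX' : (1:ℝ) - X ≠ 0 := ne_of_gt h1X
  have hXY' : (1:ℝ) - X*Y ≠ 0 := ne_of_gt h1XY
  have hpX2' : (1:ℝ) - (p:ℝ)*X^2 ≠ 0 := ne_of_gt h1pX2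
  have hpne : (p:ℝ) ≠ 0 := ne_of_gt hp0
  have hden : ((1:ℝ)-X) * (1-(p:ℝ)*X^2) * (1-X*Y) ≠ 0 :=
    mul_ne_zero (mul_ne_zero hX' hpX2') hXY'
  have key2 : ((1:ℝ) - t) * (p:ℝ) = (p:ℝ) - 1 := by
    rw [htdef, sub_mul, inv_mul_cancel₀ hpne, one_mul]
  rw [eq_div_iff hden]
  calc ((1-t)^2)⁻¹ * ((1-t)^3 * ((p:ℝ) * X^3 * ((1 - X*Y)⁻¹ * ((1 - (p:ℝ)*X^2)⁻¹
          * (1 - X)⁻¹)))) * ((1-X) * (1 - (p:ℝ)*X^2) * (1-X*Y))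
      = (((1-t)^2)⁻¹ * (1-t)^2) * (((1-X)⁻¹*(1-X)) * ((1-(p:ℝ)*X^2)⁻¹*(1-(p:ℝ)*X^2))
          * ((1-X*Y)⁻¹*(1-X*Y))) * (((1-t) * (p:ℝ)) * X^3) := by ring
    _ = ((p:ℝ)-1) * X^3 := by
        rw [inv_mul_cancel₀ (pow_ne_zero 2 ht'), inv_mul_cancel₀ hX', inv_mul_cancel₀ hpX2',
          inv_mul_cancel₀ hXY', key2]
        ring
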